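/- With the definitions below, m_tI > 0, and Σ_{j=1}^{n+1} Δv_sc(j) ≠ Σ_{j=1}^{n+1} Δv_sn(j), the equality m_sIc = m_sIn holds if and only if m_sF/m_tI = α, where α := [Σ_{j=1}^{n} {(m_req/m_tI)·exp((Σ_{k=1}^{j} Δv_sn(k))/(Isp_s·g0)) − ((1 + m_req/m_tI)·exp(Δv_tout(j)/(Isp_t·g0)) − exp(−Δv_tin(j)/(Isp_t·g0)))·exp((Σ_{k=1}^{j} Δv_sc(k))/(Isp_s·g0))}] / [exp((Σ_{j=1}^{n+1} Δv_sc(j))/(Isp_s·g0)) − exp((Σ_{j=1}^{n+1} Δv_sn(j))/(Isp_s·g0))]. -/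
import Mathlib


/-- The cooperative and non-cooperative architectures require the same initial servicer
mass exactly when the dry-servicer to initial-target mass ratio equals the critical mass
ratio α (assuming the total servicer Δv's differ between the two architectures). -/
theorem stmt_7 (n : ℕ) (hn : 1 ≤ n)
    (g0 Isp_s Isp_t m_sF m_tI m_req : ℝ)
    (hg0 : 0 < g0) (hIsps : 0 < Isp_s) (hIspt : 0 < Isp_t) (htI : 0 < m_tI)
    (Δv_sn Δv_sc Δv_tin Δv_tout : ℕ → ℝ)
    (hne : (∑ j ∈ Finset.Icc 1 (n + 1), Δv_sc j) ≠
      (∑ j ∈ Finset.Icc 1 (n + 1), Δv_sn j))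
    (m_sIn m_sIc α : ℝ)
    (hIn : m_sIn = m_sF *
        Real.exp ((∑ j ∈ Finset.Icc 1 (n + 1), Δv_sn j) / (Isp_s * g0)) +
      ∑ j ∈ Finset.Icc 1 n,
        m_req * Real.exp ((∑ k ∈ Finset.Icc 1 j, Δv_sn k) / (Isp_s * g0)))
    (hIc : m_sIc = m_sF *
        Real.exp ((∑ j ∈ Finset.Icc 1 (n + 1), Δv_sc j) / (Isp_s * g0)) +
      ∑ j ∈ Finset.Icc 1 n,
        ((m_tI + m_req) * Real.exp (Δv_tout j / (Isp_t * g0)) -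
          m_tI * Real.exp (-Δv_tin j / (Isp_t * g0))) *
          Real.exp ((∑ k ∈ Finset.Icc 1 j, Δv_sc k) / (Isp_s * g0)))
    (hα : α =
      (∑ j ∈ Finset.Icc 1 n,
        ((m_req / m_tI) *
            Real.exp ((∑ k ∈ Finset.Icc 1 j, Δv_sn k) / (Isp_s * g0)) -
          ((1 + m_req / m_tI) * Real.exp (Δv_tout j / (Isp_t * g0)) -
              Real.exp (-Δv_tin j / (Isp_t * g0))) *
            Real.exp ((∑ k ∈ Finset.Icc 1 j, Δv_sc k) / (Isp_s * g0)))) /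
      (Real.exp ((∑ j ∈ Finset.Icc 1 (n + 1), Δv_sc j) / (Isp_s * g0)) -
        Real.exp ((∑ j ∈ Finset.Icc 1 (n + 1), Δv_sn j) / (Isp_s * g0)))) :
    m_sIc = m_sIn ↔ m_sF / m_tI = α := by
  set Ec := Real.exp ((∑ j ∈ Finset.Icc 1 (n + 1), Δv_sc j) / (Isp_s * g0)) with hEc
  set En := Real.exp ((∑ j ∈ Finset.Icc 1 (n + 1), Δv_sn j) / (Isp_s * g0)) with hEn
  set A := ∑ j ∈ Finset.Icc 1 n,
        m_req * Real.exp ((∑ k ∈ Finset.Icc 1 j, Δv_sn k) / (Isp_s * g0)) with hA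
  set B := ∑ j ∈ Finset.Icc 1 n,
        ((m_tI + m_req) * Real.exp (Δv_tout j / (Isp_t * g0)) -
          m_tI * Real.exp (-Δv_tin j / (Isp_t * g0))) *
          Real.exp ((∑ k ∈ Finset.Icc 1 j, Δv_sc k) / (Isp_s * g0)) with hB
  have htI' : m_tI ≠ 0 := ne_of_gt htI
  have hNum : (∑ j ∈ Finset.Icc 1 n,
        ((m_req / m_tI) *
            Real.exp ((∑ k ∈ Finset.Icc 1 j, Δv_sn k) / (Isp_s * g0)) -
          ((1 + m_req / m_tI) * Real.exp (Δv_tout j / (Isp_t * g0)) -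
              Real.exp (-Δv_tin j / (Isp_t * g0))) *
            Real.exp ((∑ k ∈ Finset.Icc 1 j, Δv_sc k) / (Isp_s * g0)))) = (A - B) / m_tI := by
    rw [hA, hB, ← Finset.sum_sub_distrib, Finset.sum_div]
    refine Finset.sum_congr rfl fun j _ => ?_
    field_simp
  have hD : Ec - En ≠ 0 := by
    refine sub_ne_zero.mpr fun h => hne ?_
    have h2 := Real.exp_injective (hEc ▸ hEn ▸ h)
    have hc : Isp_s * g0 ≠ 0 := by positivity
    field_simp at h2
    exact h2
  rw [hIc, hIn, hα, hNum]
  rw [div_div]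
  constructor
  · intro h
    have h1 : m_sF * (Ec - En) = A - B := by linarith
    rw [div_eq_div_iff htI' (mul_ne_zero htI' hD)]
    linear_combination m_tI * h1
  · intro h
    have h1 : m_sF * (m_tI * (Ec - En)) = (A - B) * m_tI := by
      rw [div_eq_div_iff htI' (mul_ne_zero htI' hD)] at h
      linarith
    have h2 : m_sF * (Ec - En) = A - B :=
      mul_right_cancel₀ htI' (by linear_combination h1)
    linarith
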